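/- Let G be a finite non-abelian group. Then Pr(G) = (1/|G'|)(1 + (|G'|-1)/|G : Z(G)|) if and only if |Cl_G(x)| = |G'| for all x ∈ G − Z(G), where Cl_G(x) is the conjugacy class of x in G. -/

import Mathlib

open MulAction Finset

set_option linter.unusedSectionVars false

section aux
variable {G : Type*} [Group G] [Fintype G]

noncomputable local instance : Fintype (ConjAct G) := ‹Fintype G›

private lemma orbitSet_eq' (x : G) :
    {z : G | ∃ g : G, g * x * g⁻¹ = z} = MulAction.orbit (ConjAct G) x := by
  ext z
  simp only [Set.mem_setOf_eq, MulAction.mem_orbit_iff, ConjAct.smul_def]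
  constructor
  · rintro ⟨g, hg⟩; exact ⟨ConjAct.toConjAct g, hg⟩
  · rintro ⟨g, hg⟩; exact ⟨ConjAct.ofConjAct g, hg⟩

private lemma stab_card' (x : G) :
    Nat.card {y : G // x * y = y * x} = Nat.card (stabilizer (ConjAct G) x) := by
  refine Nat.card_congr (Equiv.subtypeEquiv ConjAct.toConjAct.toEquiv fun y => ?_)
  constructor
  · intro h
    show y * x * y⁻¹ = x
    rw [← h, mul_inv_cancel_right]
  · intro h
    have h2 : y * x * y⁻¹ = x := h
    calc x * y = (y * x * y⁻¹) * y := by rw [h2]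
    _ = y * x := by group

private lemma orbit_stab' (x : G) :
    Nat.card {y : G // x * y = y * x} * Nat.card {z : G | ∃ g : G, g * x * g⁻¹ = z}
      = Fintype.card G := by
  classical
  rw [stab_card', orbitSet_eq', Nat.card_eq_fintype_card, Nat.card_eq_fintype_card, mul_comm,
    MulAction.card_orbit_mul_card_stabilizer_eq_card_group (ConjAct G) x]
  rfl

open scoped commutatorElement in
/-- the conjugacy class of any element embeds in a coset of the commutator subgroup -/
private lemma orbit_le_commutator' (x : G) :
    Nat.card {z : G | ∃ g : G, g * x * g⁻¹ = z} ≤ Nat.card (commutator G) := by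
  refine Nat.card_le_card_of_injective
    (fun z => (⟨x⁻¹ * z.1, ?_⟩ : commutator G)) ?_
  · obtain ⟨g, hg⟩ := z.2
    have : x⁻¹ * z.1 = ⁅x⁻¹, g⁆ := by rw [← hg]; group
    rw [this, commutator_def]
    exact Subgroup.commutator_mem_commutator (Subgroup.mem_top _) (Subgroup.mem_top _)
  · intro a b hab
    have := congrArg Subtype.val hab
    simp only at this
    exact Subtype.ext (mul_left_cancel this)

private lemma N_eq' :
    Nat.card {p : G × G // p.1 * p.2 = p.2 * p.1}
      = ∑ x : G, Nat.card {y : G // x * y = y * x} := by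
  classical
  simp_rw [Nat.card_eq_fintype_card]
  rw [Fintype.card_congr (Equiv.subtypeProdEquivSigmaSubtype fun a b : G => a * b = b * a),
    Fintype.card_sigma]

private lemma central_stab' {x : G} (hx : x ∈ Subgroup.center G) :
    Nat.card {y : G // x * y = y * x} = Fintype.card G := by
  rw [Nat.card_congr (Equiv.subtypeUnivEquiv fun y => (Subgroup.mem_center_iff.mp hx y).symm)]
  exact Nat.card_eq_fintype_card

end aux

private lemma rat_iff (N n z i m : ℚ) (hn : n ≠ 0) (hi : i ≠ 0) (hm : m ≠ 0)
    (hzi : z * i = n) :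
    N / n ^ 2 = (1 / m) * (1 + (m - 1) / i) ↔ N * m = z * n * m + (n - z) * n := by
  rw [div_eq_iff (pow_ne_zero 2 hn)]
  constructor
  · intro h
    apply mul_left_cancel₀ hi
    field_simp at h
    linear_combination h - n * (m - 1) * hzi
  · intro h
    field_simp
    linear_combination i * h + n * (m - 1) * hzi

/-- The commutativity degree of a finite group `G`. -/
noncomputable def commDeg (G : Type*) [Group G] : ℚ :=
  (Nat.card {p : G × G // p.1 * p.2 = p.2 * p.1} : ℚ) / (Nat.card G) ^ 2

theorem commDeg_eq_lower_bound_iff (G : Type*) [Group G] [Fintype G]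
    (hG : ¬ (∀ a b : G, a * b = b * a)) :
    commDeg G = (1 / (Nat.card (commutator G) : ℚ)) *
        (1 + ((Nat.card (commutator G) : ℚ) - 1) / ((Subgroup.center G).index : ℚ)) ↔
      ∀ x : G, x ∉ Subgroup.center G →
        Nat.card {z : G | ∃ g : G, g * x * g⁻¹ = z} = Nat.card (commutator G) := by
  classical
  set nn := Fintype.card G with hnn
  set mm := Nat.card (commutator G) with hmm
  set zz := Nat.card (Subgroup.center G) with hzz
  set ii := (Subgroup.center G).index with hii
  set N := Nat.card {p : G × G // p.1 * p.2 = p.2 * p.1} with hN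
  have hnpos : 0 < nn := Fintype.card_pos
  have hmpos : 0 < mm := Nat.card_pos
  have hzi : zz * ii = nn := by
    rw [hzz, hii, Subgroup.card_mul_index, Nat.card_eq_fintype_card]
  have hipos : 0 < ii := by
    rcases Nat.eq_zero_or_pos ii with h | h
    · rw [h, mul_zero] at hzi; omega
    · exact h
  have hzn : zz ≤ nn := by nlinarith [hzi, hipos]
  -- reduce the rational equation to a natural-number equation
  rw [commDeg, Nat.card_eq_fintype_card (α := G), ← hnn,
    rat_iff _ _ (zz : ℚ) _ _ (by exact_mod_cast hnpos.ne') (by exact_mod_cast hipos.ne')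
      (by exact_mod_cast hmpos.ne') (by exact_mod_cast hzi),
    show ((nn : ℚ) - zz) = ((nn - zz : ℕ) : ℚ) from (Nat.cast_sub hzn).symm]
  norm_cast
  -- now a purely combinatorial statement
  set s : G → ℕ := fun x => Nat.card {y : G // x * y = y * x} with hs
  set c : G → ℕ := fun x => Nat.card {z : G | ∃ g : G, g * x * g⁻¹ = z} with hc
  have hNsum : N = ∑ x : G, s x := N_eq'
  have hsc : ∀ x : G, s x * c x = nn := fun x => orbit_stab' x
  have hspos : ∀ x : G, 0 < s x := fun x => by
    have : Nonempty {y : G // x * y = y * x} := ⟨⟨1, by simp⟩⟩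
    exact Nat.card_pos
  have hcm : ∀ x : G, c x ≤ mm := fun x => orbit_le_commutator' x
  set T : Finset G := univ.filter (fun x => ¬ x ∈ Subgroup.center G) with hT
  have hzcard : zz = (univ.filter (fun x => x ∈ Subgroup.center G)).card := by
    rw [hzz, Nat.card_eq_fintype_card, Fintype.card_subtype]
  have hTcard : T.card = nn - zz := by
    have h1 : (univ.filter (fun x => x ∈ Subgroup.center G)).card + T.card = nn := by
      rw [hT, hnn, ← Finset.card_univ (α := G)]
      exact Finset.card_filter_add_card_filter_not
        (p := fun x => x ∈ Subgroup.center G)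
    omega
  have hA : ∑ x ∈ univ.filter (fun x => x ∈ Subgroup.center G), s x * mm = zz * nn * mm := by
    rw [Finset.sum_congr rfl (fun x hx => by
        rw [show s x = nn from central_stab' (Finset.mem_filter.mp hx).2]),
      Finset.sum_const, smul_eq_mul, ← hzcard]
    ring
  have hsplit : N * mm = zz * nn * mm + ∑ x ∈ T, s x * mm := by
    rw [hNsum, Finset.sum_mul, ← Finset.sum_filter_add_sum_filter_not univ
      (fun x => x ∈ Subgroup.center G) (fun x => s x * mm), hA, hT]
  have goal_iff : (∑ x ∈ T, s x * mm = (nn - zz) * nn) ↔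
      (∀ x : G, x ∉ Subgroup.center G → c x = mm) := by
    constructor
    · intro h x hx
      have hxT : x ∈ T := Finset.mem_filter.mpr ⟨Finset.mem_univ x, hx⟩
      have hle : ∀ y ∈ T, nn ≤ s y * mm := fun y _ => by
        calc nn = s y * c y := (hsc y).symm
        _ ≤ s y * mm := Nat.mul_le_mul_left _ (hcm y)
      have hsum_const : ∑ _y ∈ T, nn = ∑ y ∈ T, s y * mm := by
        rw [Finset.sum_const, smul_eq_mul, hTcard, h]
      have heq := (Finset.sum_eq_sum_iff_of_le hle).mp hsum_const x hxT
      have h2 : s x * c x = s x * mm := by rw [hsc x, ← heq]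
      exact Nat.eq_of_mul_eq_mul_left (hspos x) h2
    · intro h
      rw [Finset.sum_congr rfl (fun x hx => by
          have hx' : x ∉ Subgroup.center G := (Finset.mem_filter.mp hx).2
          rw [← h x hx', hsc x]),
        Finset.sum_const, smul_eq_mul, hTcard]
  rw [← hN]
  constructor
  · intro h
    exact goal_iff.mp (by omega)
  · intro h
    have := goal_iff.mpr h
    omega
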